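/- arXiv:2210.00508 — 13 statements merged into one kernel-verified Lean document; each statement's English description precedes it below -/
import Mathlib

section
/- The ruler sequence, defined as the fixed point of the morphism ρ(n) = 0(n+1) starting from 0, is square-free; that is, it contains no nonempty factor of the form yy. -/
/-- The morphism ρ applied to an infinite word: ρ(n) = 0 (n+1). -/
def rhoInf (f : ℕ → ℕ) : ℕ → ℕ := fun n => if n % 2 = 0 then 0 else f (n / 2) + 1

/-- An infinite word (ℕ → ℕ) is square-free: it contains no nonempty factor yy. -/
def SqFreeInf (f : ℕ → ℕ) : Prop :=
  ∀ i l : ℕ, 0 < l → ∃ j < l, f (i + j) ≠ f (i + l + j)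

/-- The ruler sequence, i.e. the infinite fixed point of ρ starting with 0,
is square-free. -/
theorem ruler_sequence_squarefree (f : ℕ → ℕ) (hfix : rhoInf f = f) (h0 : f 0 = 0) :
    SqFreeInf f := by
  have he : ∀ k, f (2*k) = 0 := fun k => by
    rw [← hfix]; simp [rhoInf, Nat.mul_mod_right]
  have ho : ∀ k, f (2*k+1) = f k + 1 := fun k => by
    conv_lhs => rw [← hfix]
    have h1 : (2*k+1) % 2 = 1 := by omega
    have h2 : (2*k+1) / 2 = k := by omega
    simp [rhoInf, h1, h2]
  have main : ∀ l, 0 < l → ∀ i, ∃ j, j < l ∧ f (i + j) ≠ f (i + l + j) := by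
    intro l
    induction l using Nat.strong_induction_on with
    | _ l IH =>
      intro hl i
      rcases Nat.even_or_odd l with ⟨m, hm⟩ | ⟨m, hm⟩
      · have hm0 : 0 < m := by omega
        obtain ⟨t, ht, hne⟩ := IH m (by omega) hm0 (i / 2)
        rcases Nat.even_or_odd i with ⟨a, ha⟩ | ⟨a, ha⟩
        · refine ⟨2*t+1, by omega, ?_⟩
          have e1 : i + (2*t+1) = 2*(i/2 + t) + 1 := by omega
          have e2 : i + l + (2*t+1) = 2*(i/2 + m + t) + 1 := by omega
          rw [e1, e2, ho, ho]
          omega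
        · refine ⟨2*t, by omega, ?_⟩
          have e1 : i + 2*t = 2*(i/2 + t) + 1 := by omega
          have e2 : i + l + 2*t = 2*(i/2 + m + t) + 1 := by omega
          rw [e1, e2, ho, ho]
          omega
      · refine ⟨0, hl, ?_⟩
        rcases Nat.even_or_odd i with ⟨a, ha⟩ | ⟨a, ha⟩
        · have h1 : f (i+0) = 0 := by rw [show i+0 = 2*a by omega]; exact he a
          have h2 : f (i+l+0) ≠ 0 := by
            rw [show i+l+0 = 2*(a+m)+1 by omega, ho]; omega
          omega
        · have h1 : f (i+0) ≠ 0 := by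
            rw [show i+0 = 2*a+1 by omega, ho]; omega
          have h2 : f (i+l+0) = 0 := by
            rw [show i+l+0 = 2*(a+m+1) by omega]; exact he _
          omega
  intro i l hl
  obtain ⟨j, hj, h⟩ := main l hl i
  exact ⟨j, hj, h⟩
end

section
/- For every n ≥ 0, the word R_n := ρ^n(0) satisfies the recurrence R_{n+1} = R_n · R_n⁺, where R_n⁺ denotes R_n with its last letter increased by 1. -/
/-- The morphism ρ : ℕ* → ℕ* mapping letter n to the word 0(n+1). -/
def rho (w : List ℕ) : List ℕ := w.flatMap (fun n => [0, n + 1])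

/-- R_n := ρ^n(0). -/
def R (n : ℕ) : List ℕ := rho^[n] [0]

/-- w⁺: the word w with its last letter increased by 1. -/
def succW (w : List ℕ) : List ℕ := w.dropLast ++ [w.getLast! + 1]

lemma rho_append (a b : List ℕ) : rho (a ++ b) = rho a ++ rho b := by
  simp [rho]

lemma succW_concat (a : List ℕ) (x : ℕ) : succW (a ++ [x]) = a ++ [x + 1] := by
  have h : (a ++ [x]).getLast! = x := List.getLast!_of_getLast? (by simp)
  simp [succW, h]

lemma succW_rho (w : List ℕ) (h : w ≠ []) : succW (rho w) = rho (succW w) := by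
  obtain ⟨a, x, rfl⟩ := List.eq_nil_or_concat w |>.resolve_left h
  simp only [List.concat_eq_append]
  rw [succW_concat, rho_append, rho_append]
  show succW (rho a ++ ([0] ++ [x + 1])) = _
  rw [← List.append_assoc, succW_concat]
  simp [rho]

lemma R_ne_nil (n : ℕ) : R n ≠ [] := by
  induction n with
  | zero => simp [R]
  | succ n ih =>
    rw [R, Function.iterate_succ_apply', ← R]
    obtain ⟨a, l, hl⟩ := List.exists_cons_of_ne_nil ih
    rw [hl]; simp [rho]

/-- For every n ≥ 0, R_{n+1} = R_n · R_n⁺. -/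
theorem R_succ_eq (n : ℕ) : R (n + 1) = R n ++ succW (R n) := by
  induction n with
  | zero => rfl
  | succ n ih =>
    have h1 : R (n + 2) = rho (R (n + 1)) := by
      rw [R, Function.iterate_succ_apply']; rfl
    have h2 : R (n + 1) = rho (R n) := by
      rw [R, Function.iterate_succ_apply']; rfl
    calc R (n + 2) = rho (R (n + 1)) := h1
      _ = rho (R n) ++ rho (succW (R n)) := by rw [ih, rho_append]
      _ = R (n + 1) ++ succW (rho (R n)) := by
            rw [← succW_rho _ (R_ne_nil n), ← h2]
      _ = R (n + 1) ++ succW (R (n + 1)) := by rw [← h2]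
end

section
/- If the morphism ρ(n) = 0(n+1) is applied to a square-free word w, the image ρ(w) is square-free. -/
lemma rho_length (w : List ℕ) : (rho w).length = 2 * w.length := by
  induction w with
  | nil => rfl
  | cons a w ih => simp only [rho, List.flatMap_cons] at ih ⊢; simp at ih ⊢; omega

lemma rho_cons (a : ℕ) (w : List ℕ) : rho (a :: w) = 0 :: (a+1) :: rho w := rfl

lemma rho_get_even (w : List ℕ) (i : ℕ) (h : i < w.length) :
    (rho w)[2*i]? = some 0 := by
  induction w generalizing i with
  | nil => simp at h
  | cons a w ih =>
    rcases i with _ | i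
    · rfl
    · rw [rho_cons]
      have h2 : 2*(i+1) = (2*i)+1+1 := by ring
      rw [h2]
      simpa using ih i (by simpa using h)

lemma rho_get_odd (w : List ℕ) (i : ℕ) :
    (rho w)[2*i+1]? = w[i]?.map (· + 1) := by
  induction w generalizing i with
  | nil => simp [rho]
  | cons a w ih =>
    rcases i with _ | i
    · simp [rho_cons]
    · rw [rho_cons]
      have h2 : 2*(i+1)+1 = (2*i+1)+1+1 := by ring
      rw [h2]
      simpa using ih i

/-- A finite word is square-free if it contains no factor yy with y nonempty. -/
def SqFree (w : List ℕ) : Prop := ∀ y : List ℕ, y ≠ [] → ¬ (y ++ y) <:+: w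

/-- The image under ρ of a square-free word is square-free. -/
theorem rho_squarefree (w : List ℕ) (hw : SqFree w) : SqFree (rho w) := by
  rintro y hy ⟨s, t, hst⟩
  set p := s.length with hp
  set L := y.length with hL
  have hLpos : 0 < L := List.length_pos_iff.mpr hy
  have hlen : p + 2 * L + t.length = 2 * w.length := by
    have := congrArg List.length hst
    simp [rho_length] at this
    omega
  have h1 : ∀ k, k < L → (rho w)[p + k]? = y[k]? := by
    intro k hk
    rw [← hst, List.append_assoc, List.getElem?_append_right (by omega)]
    have e1 : p + k - p = k := by omega
    rw [e1, List.append_assoc, List.getElem?_append_left (by omega)]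
  have h2 : ∀ k, k < L → (rho w)[p + L + k]? = y[k]? := by
    intro k hk
    rw [← hst, List.append_assoc, List.getElem?_append_right (by omega)]
    have e1 : p + L + k - p = L + k := by omega
    rw [e1, List.append_assoc, List.getElem?_append_right (by omega)]
    have e2 : L + k - y.length = k := by omega
    rw [e2, List.getElem?_append_left (by omega)]
  have key : ∀ k, k < L → (rho w)[p + k]? = (rho w)[p + L + k]? := by
    intro k hk; rw [h1 k hk, h2 k hk]
  have odd_ne_even : ∀ i j : ℕ, i < w.length → j < w.length →
      (rho w)[2*i]? ≠ (rho w)[2*j+1]? := by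
    intro i j hi hj h
    rw [rho_get_even w i hi, rho_get_odd] at h
    rw [List.getElem?_eq_getElem hj] at h
    simp at h
  rcases Nat.even_or_odd L with ⟨m, hm⟩ | ⟨m, hm⟩
  · -- even length
    have hmpos : 0 < m := by omega
    have main : ∃ q, q + (m+m) ≤ w.length ∧ ∀ i, i < m → w[q+i]? = w[q+m+i]? := by
      rcases Nat.even_or_odd p with ⟨q, hq⟩ | ⟨q, hq⟩
      · refine ⟨q, by omega, fun i hi => ?_⟩
        have hk := key (2*i+1) (by omega)
        have e1 : p + (2*i+1) = 2*(q+i)+1 := by omega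
        have e2 : p + L + (2*i+1) = 2*(q+m+i)+1 := by omega
        rw [e1, e2, rho_get_odd, rho_get_odd] at hk
        exact Option.map_injective (add_left_injective 1) hk
      · refine ⟨q, by omega, fun i hi => ?_⟩
        have hk := key (2*i) (by omega)
        have e1 : p + (2*i) = 2*(q+i)+1 := by omega
        have e2 : p + L + (2*i) = 2*(q+m+i)+1 := by omega
        rw [e1, e2, rho_get_odd, rho_get_odd] at hk
        exact Option.map_injective (add_left_injective 1) hk
    obtain ⟨q, hq2m, heq⟩ := main
    set z := (w.drop q).take m with hz
    have hzlen : z.length = m := by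
      simp [hz]; omega
    have heq2 : (w.drop q).take (m+m) = z ++ z := by
      apply List.ext_getElem?
      intro n
      by_cases hn1 : n < m
      · rw [List.getElem?_append_left (by omega)]
        rw [hz, List.getElem?_take_of_lt hn1, List.getElem?_take_of_lt (by omega)]
      · by_cases hn2 : n < m + m
        · rw [List.getElem?_append_right (by omega), hzlen]
          have h := heq (n - m) (by omega)
          rw [hz, List.getElem?_take_of_lt hn2, List.getElem?_take_of_lt (by omega),
            List.getElem?_drop, List.getElem?_drop]
          have e5 : q + n = q + m + (n - m) := by omega
          have e6 : q + (n - m) = q + (n - m) := rfl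
          rw [e5, ← h]
        · rw [List.getElem?_append_right (by omega), hzlen]
          rw [hz, List.getElem?_take_eq_none (by omega), List.getElem?_take_eq_none (by omega)]
    have hinf : (z ++ z) <:+: w := by
      rw [← heq2]
      exact (List.take_prefix _ _).isInfix.trans (List.drop_suffix _ _).isInfix
    exact hw z (by intro h; rw [h] at hzlen; simp at hzlen; omega) hinf
  · -- odd length
    have hk := key 0 (by omega)
    rcases Nat.even_or_odd p with ⟨q, hq⟩ | ⟨q, hq⟩
    · have e1 : p + 0 = 2*q := by omega
      have e2 : p + L + 0 = 2*(q+m)+1 := by omega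
      rw [e1, e2] at hk
      exact odd_ne_even q (q+m) (by omega) (by omega) hk
    · have e1 : p + L + 0 = 2*(q+m+1) := by omega
      have e2 : p + 0 = 2*q+1 := by omega
      rw [e1, e2] at hk
      exact odd_ne_even (q+m+1) q (by omega) (by omega) hk.symm
end

section
/- The ruler morphism ρ is L-commuting over nonempty finite square-free words: for every nonempty finite square-free word x, we have ρ(L(x)) = L(ρ(x)), where L(w) denotes the lexicographically least infinite word over ℕ with prefix w whose only square factors are contained in the prefix w. -/
/-- f begins with the finite word w. -/
def HasPrefixW (f : ℕ → ℕ) (w : List ℕ) : Prop := ∀ i < w.length, f i = w.getD i 0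

/-- Every square factor of f is contained in the length-|w| prefix. -/
def SquaresInPrefix (w : List ℕ) (f : ℕ → ℕ) : Prop :=
  ∀ i l : ℕ, 0 < l → (∀ j < l, f (i + j) = f (i + l + j)) → i + 2 * l ≤ w.length

def Adm (w : List ℕ) (f : ℕ → ℕ) : Prop := HasPrefixW f w ∧ SquaresInPrefix w f

/-- Lexicographic order on infinite words. -/
def lexLE (f g : ℕ → ℕ) : Prop :=
  f = g ∨ ∃ i, (∀ j < i, f j = g j) ∧ f i < g i

/-- f = L(w): the lexicographically least infinite word with prefix w whose only
square factors are contained in the prefix w. -/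
def IsL (w : List ℕ) (f : ℕ → ℕ) : Prop := Adm w f ∧ ∀ g, Adm w g → lexLE f g

def InfSqFree (f : ℕ → ℕ) : Prop := ∀ i l : ℕ, 0 < l → ¬ (∀ j < l, f (i + j) = f (i + l + j))


lemma rhoInf_even (f : ℕ → ℕ) {n : ℕ} (h : n % 2 = 0) : rhoInf f n = 0 := by simp [rhoInf, h]

lemma rhoInf_odd (f : ℕ → ℕ) {n : ℕ} (h : n % 2 = 1) : rhoInf f n = f (n / 2) + 1 := by
  simp [rhoInf, h]

lemma rho_getD (w : List ℕ) : ∀ n, n < 2 * w.length →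
    (rho w).getD n 0 = if n % 2 = 0 then 0 else w.getD (n / 2) 0 + 1 := by
  induction w with
  | nil => intro n hn; simp at hn
  | cons a w ih =>
    intro n hn
    match n with
    | 0 => simp [rho]
    | 1 => simp [rho]
    | (n+2) =>
      have h2 : n < 2 * w.length := by simp at hn; omega
      have hstep : (rho (a :: w)).getD (n+2) 0 = (rho w).getD n 0 := by
        simp [rho]
      rw [hstep, ih n h2]
      have hm : (n+2) % 2 = n % 2 := by omega
      have hd : (n+2)/2 = n/2 + 1 := by omega
      rw [hm, hd]
      rcases Nat.mod_two_eq_zero_or_one n with h | h <;> simp [h]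

lemma rhoInf_sqfree {f : ℕ → ℕ} (hf : InfSqFree f) : InfSqFree (rhoInf f) := by
  intro i l hl hsq
  rcases Nat.mod_two_eq_zero_or_one l with hle | hlo
  · -- l even, l = 2m
    obtain ⟨m, hm⟩ : ∃ m, l = 2 * m := ⟨l / 2, by omega⟩
    have hmpos : 0 < m := by omega
    rcases Nat.mod_two_eq_zero_or_one i with hie | hio
    · refine hf (i / 2) m hmpos (fun t ht => ?_)
      have h1 := hsq (2*t+1) (by omega)
      rw [rhoInf_odd f (by omega : (i + (2*t+1)) % 2 = 1),
          rhoInf_odd f (by omega : (i + l + (2*t+1)) % 2 = 1)] at h1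
      have e1 : (i + (2*t+1)) / 2 = i/2 + t := by omega
      have e2 : (i + l + (2*t+1)) / 2 = i/2 + m + t := by omega
      rw [e1, e2] at h1
      omega
    · refine hf (i / 2) m hmpos (fun t ht => ?_)
      have h1 := hsq (2*t) (by omega)
      rw [rhoInf_odd f (by omega : (i + 2*t) % 2 = 1),
          rhoInf_odd f (by omega : (i + l + 2*t) % 2 = 1)] at h1
      have e1 : (i + 2*t) / 2 = i/2 + t := by omega
      have e2 : (i + l + 2*t) / 2 = i/2 + m + t := by omega
      rw [e1, e2] at h1
      omega
  · -- l odd: parity mismatch at j = 0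
    have h0 := hsq 0 hl
    rcases Nat.mod_two_eq_zero_or_one i with hie | hio
    · rw [rhoInf_even f (by omega : (i+0) % 2 = 0),
          rhoInf_odd f (by omega : (i+l+0) % 2 = 1)] at h0
      omega
    · rw [rhoInf_odd f (by omega : (i+0) % 2 = 1),
          rhoInf_even f (by omega : (i+l+0) % 2 = 0)] at h0
      omega

lemma adm_sqfree {x : List ℕ} {f : ℕ → ℕ} (hsf : SqFree x) (ha : Adm x f) : InfSqFree f := by
  intro i l hl hsq
  obtain ⟨hp, hs⟩ := ha
  have hb : i + 2 * l ≤ x.length := hs i l hl hsq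
  set y : List ℕ := (x.drop i).take l with hy
  have hylen : y.length = l := by simp [hy]; omega
  have hfx : ∀ m, (hm : m < x.length) → f m = x[m]'hm := by
    intro m hm
    rw [hp m hm, List.getD_eq_getElem x 0 hm]
  -- key: (x.drop i).take l = (x.drop (i+l)).take l
  have hkey : (x.drop i).take l = (x.drop (i+l)).take l := by
    apply List.ext_getElem
    · simp; omega
    · intro k h1 h2
      have hk : k < l := by simp at h1; omega
      rw [List.getElem_take, List.getElem_take, List.getElem_drop, List.getElem_drop]
      have h3 := hsq k hk
      rw [hfx (i+k) (by omega), hfx (i+l+k) (by omega)] at h3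
      rw [h3]
  have hyy : y ++ y = (x.drop i).take (2*l) := by
    have : 2 * l = l + l := by omega
    rw [this, List.take_add, List.drop_drop]
    rw [hy, hkey]
  have hinf : (y ++ y) <:+: x := by
    rw [hyy]
    exact (List.take_prefix _ _).isInfix.trans (List.drop_suffix i x).isInfix
  exact hsf y (by intro h; rw [h] at hylen; simp at hylen; omega) hinf

/-- The ruler morphism is L-commuting over nonempty finite square-free words:
ρ(L(x)) = L(ρ(x)). -/
theorem rho_L_commuting (x : List ℕ) (hx : x ≠ []) (hsf : SqFree x)
    (f g : ℕ → ℕ) (hf : IsL x f) (hg : IsL (rho x) g) :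
    rhoInf f = g := by
  obtain ⟨hfa, hfm⟩ := hf
  obtain ⟨hga, hgm⟩ := hg
  have hxl : 0 < x.length := List.length_pos_iff.mpr hx
  have hfsq : InfSqFree f := adm_sqfree hsf hfa
  have hFsq : InfSqFree (rhoInf f) := rhoInf_sqfree hfsq
  -- rhoInf f is admissible for rho x
  have hFpre : HasPrefixW (rhoInf f) (rho x) := by
    intro n hn
    rw [rho_length] at hn
    rw [rho_getD x n hn]
    rcases Nat.mod_two_eq_zero_or_one n with h | h
    · rw [rhoInf_even f h, if_pos h]
    · rw [rhoInf_odd f h, if_neg (by omega)]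
      have hn2 : n / 2 < x.length := by omega
      rw [hfa.1 (n/2) hn2]
  have hFadm : Adm (rho x) (rhoInf f) := by
    refine ⟨hFpre, fun i l hl hsq => absurd hsq (hFsq i l hl)⟩
  -- minimality of rhoInf f among Adm (rho x)
  have hFmin : ∀ h : ℕ → ℕ, Adm (rho x) h → lexLE (rhoInf f) h := by
    intro h hh
    obtain ⟨hhp, hhs⟩ := hh
    by_cases heq : rhoInf f = h
    · exact Or.inl heq
    have hex : ∃ i, rhoInf f i ≠ h i := by
      by_contra hc
      push_neg at hc
      exact heq (funext hc)
    right
    refine ⟨Nat.find hex, fun j hj => not_ne_iff.mp (Nat.find_min hex hj), ?_⟩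
    set i := Nat.find hex with hidef
    have hi : rhoInf f i ≠ h i := Nat.find_spec hex
    have hagree : ∀ j < i, rhoInf f j = h j := fun j hj => not_ne_iff.mp (Nat.find_min hex hj)
    have hilen : 2 * x.length ≤ i := by
      by_contra hc
      push_neg at hc
      have h1 := hFpre i (by rw [rho_length]; omega)
      have h2 := hhp i (by rw [rho_length]; omega)
      exact hi (h1.trans h2.symm)
    rcases Nat.mod_two_eq_zero_or_one i with hie | hio
    · rw [rhoInf_even f hie] at hi ⊢
      omega
    · set a := i / 2 with hadef
      have hia : i = 2 * a + 1 := by omega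
      have hax : x.length ≤ a := by omega
      have hFi : rhoInf f i = f a + 1 := rhoInf_odd f hio
      rw [hFi] at hi ⊢
      by_contra hcon
      push_neg at hcon
      -- h i ≤ f a + 1 and h i ≠ f a + 1, so h i ≤ f a
      have hle : h i ≤ f a := by omega
      -- h(2k) = 0 for k ≤ a
      have hp1 : ∀ k ≤ a, h (2*k) = 0 := by
        intro k hk
        rw [← hagree (2*k) (by omega), rhoInf_even f (by omega)]
      by_cases hzero : h i = 0
      · -- square 00 at position 2a in h
        have := hhs (2*a) 1 one_pos (by
          intro j hj
          interval_cases j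
          have e1 : 2*a + 0 = 2*a := by omega
          have e2 : 2*a + 1 + 0 = i := by omega
          rw [e1, e2, hp1 a le_rfl, hzero])
        rw [rho_length] at this
        omega
      · set c := h i - 1 with hcdef
        have hci : h i = c + 1 := by omega
        have hc : c < f a := by omega
        set p : ℕ → ℕ := fun k => if k = a then c else f k with hpdef
        have hp2 : ∀ k ≤ a, h (2*k+1) = p k + 1 := by
          intro k hk
          rcases eq_or_lt_of_le hk with rfl | hk'
          · rw [← hia, hci]
            simp [hpdef]
          · rw [← hagree (2*k+1) (by omega), rhoInf_odd f (by omega)]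
            have : (2*k+1)/2 = k := by omega
            rw [this]
            simp [hpdef, Nat.ne_of_lt hk']
        -- no square of p ending within [0, a+1]
        have hclaim : ∀ s m, 0 < m → s + 2*m ≤ a + 1 → ¬ (∀ t < m, p (s+t) = p (s+m+t)) := by
          intro s m hm hsm hsq
          have hhsq : ∀ j < 2*m, h (2*s + j) = h (2*s + 2*m + j) := by
            intro j hj
            rcases Nat.mod_two_eq_zero_or_one j with hje | hjo
            · have e1 : 2*s + j = 2*(s + j/2) := by omega
              have e2 : 2*s + 2*m + j = 2*(s + m + j/2) := by omega
              rw [e1, e2, hp1 _ (by omega), hp1 _ (by omega)]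
            · have e1 : 2*s + j = 2*(s + j/2) + 1 := by omega
              have e2 : 2*s + 2*m + j = 2*(s + m + j/2) + 1 := by omega
              rw [e1, e2, hp2 _ (by omega), hp2 _ (by omega), hsq (j/2) (by omega)]
          have := hhs (2*s) (2*m) (by omega) hhsq
          rw [rho_length] at this
          -- s + 2m ≤ x.length ≤ a, so all indices < a, square lives in f
          have hsmall : s + 2*m ≤ a := by omega
          refine hfsq s m hm (fun t ht => ?_)
          have h1 := hsq t ht
          have e1 : p (s+t) = f (s+t) := by simp [hpdef]; intro hc'; omega
          have e2 : p (s+m+t) = f (s+m+t) := by simp [hpdef]; intro hc'; omega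
          rw [e1, e2] at h1
          exact h1
        -- build competitor f'
        set S : ℕ := (Finset.range (a+1)).sum p + 1 with hSdef
        have hpS : ∀ k ≤ a, p k < S := by
          intro k hk
          have : p k ≤ (Finset.range (a+1)).sum p :=
            Finset.single_le_sum (fun i _ => Nat.zero_le _) (Finset.mem_range.mpr (by omega))
          omega
        set f' : ℕ → ℕ := fun k => if k ≤ a then p k else S + k with hf'def
        have hf'sq : InfSqFree f' := by
          intro s m hm hsq
          by_cases hend : s + 2*m ≤ a + 1
          · refine hclaim s m hm hend (fun t ht => ?_)
            have h1 := hsq t ht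
            have e1 : f' (s+t) = p (s+t) := by simp [hf'def]; intro hc'; omega
            have e2 : f' (s+m+t) = p (s+m+t) := by simp [hf'def]; intro hc'; omega
            rw [e1, e2] at h1
            exact h1
          · push_neg at hend
            have h1 := hsq (m-1) (by omega)
            have e2 : s + m + (m-1) = s + 2*m - 1 := by omega
            rw [e2] at h1
            have hbig : f' (s + 2*m - 1) = S + (s + 2*m - 1) := by
              simp only [hf'def]
              rw [if_neg (by omega)]
            rw [hbig] at h1
            by_cases hsm1 : s + (m-1) ≤ a
            · have : f' (s + (m-1)) = p (s + (m-1)) := by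
                simp only [hf'def]; rw [if_pos hsm1]
              rw [this] at h1
              have := hpS (s + (m-1)) hsm1
              omega
            · have : f' (s + (m-1)) = S + (s + (m-1)) := by
                simp only [hf'def]; rw [if_neg hsm1]
              rw [this] at h1
              omega
        have hf'adm : Adm x f' := by
          constructor
          · intro k hk
            have hka : k < a := by omega
            have : f' k = f k := by
              simp only [hf'def, hpdef]
              rw [if_pos (by omega : k ≤ a), if_neg (by omega : ¬ k = a)]
            rw [this, hfa.1 k hk]
          · intro i' l' hl' hsq'
            exact absurd hsq' (hf'sq i' l' hl')
        have hlex := hfm f' hf'adm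
        have hf'a : f' a = c := by
          simp [hf'def, hpdef]
        have hf'k : ∀ k < a, f' k = f k := by
          intro k hk
          simp only [hf'def, hpdef]
          rw [if_pos (by omega : k ≤ a), if_neg (by omega : ¬ k = a)]
        rcases hlex with heq' | ⟨j, hagj, hltj⟩
        · have := congrFun heq' a
          rw [hf'a] at this
          omega
        · rcases lt_trichotomy j a with hj | rfl | hj
          · rw [hf'k j hj] at hltj
            omega
          · rw [hf'a] at hltj
            omega
          · have := hagj a hj
            rw [hf'a] at this
            omega
  -- antisymmetry
  have h1 := hFmin g hga
  have h2 := hgm (rhoInf f) hFadm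
  rcases h1 with h1 | ⟨i, hag, hlt⟩
  · exact h1
  rcases h2 with h2 | ⟨i', hag', hlt'⟩
  · exact h2.symm
  rcases lt_trichotomy i i' with hii | rfl | hii
  · have := hag' i hii
    omega
  · omega
  · have := hag i' hii
    omega
end

section
/- For all n ≥ 1, P_0(n) = R_n · P_0(n−1), where P_0(n) := R_{n+1} with its last two letters removed and R_n := ρ^n(0). -/
/-- P₀(n) := R_{n+1} with its last two letters removed. -/
def P0 (n : ℕ) : List ℕ := (R (n + 1)).dropLast.dropLast

lemma R_succ (n : ℕ) : R (n + 1) = rho (R n) := by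
  simp [R, Function.iterate_succ_apply']

lemma dropLast2 (l : List ℕ) (a b : ℕ) :
    (l ++ [a, b]).dropLast.dropLast = l := by
  have : l ++ [a, b] = (l ++ [a]) ++ [b] := by simp
  rw [this, List.dropLast_concat, List.dropLast_concat]

lemma R_eq (n : ℕ) : R (n + 1) = P0 n ++ [0, n + 1] := by
  induction n with
  | zero => rfl
  | succ n ih =>
    have h2 : R (n + 2) = rho (P0 n) ++ [0, 1, 0, n + 2] := by
      rw [R_succ, ih, rho_append]
      simp [rho]
    have hP : P0 (n + 1) = rho (P0 n) ++ [0, 1] := by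
      rw [P0, h2]
      have : rho (P0 n) ++ [0, 1, 0, n + 2]
          = (rho (P0 n) ++ [0, 1]) ++ [0, n + 2] := by simp
      rw [this, dropLast2]
    rw [h2, hP]
    simp

lemma P0_succ (n : ℕ) : P0 (n + 1) = rho (P0 n) ++ [0, 1] := by
  rw [P0, R_succ, R_eq, rho_append]
  have : rho (P0 n) ++ rho [0, n + 1]
      = (rho (P0 n) ++ [0, 1]) ++ [0, n + 2] := by simp [rho]
  rw [this, dropLast2]

/-- For all n ≥ 1, P₀(n) = R_n · P₀(n−1). -/
theorem P0_rec (n : ℕ) (hn : 1 ≤ n) : P0 n = R n ++ P0 (n - 1) := by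
  induction n with
  | zero => omega
  | succ n ih =>
    rcases Nat.eq_zero_or_pos n with h | h
    · subst h; rfl
    · have ihn := ih h
      simp only [Nat.add_sub_cancel]
      rw [P0_succ, ihn, rho_append, ← R_succ]
      have hP : P0 n = rho (P0 (n - 1)) ++ [0, 1] := by
        conv_lhs => rw [show n = n - 1 + 1 from (Nat.succ_pred_eq_of_pos h).symm]
        exact P0_succ _
      rw [← ihn, hP, List.append_assoc]
end

section
/- P_0(n) admits the product decomposition P_0(n) = R_n · R_{n−1} · ⋯ · R_3 · R_2 · R_1 for all n ≥ 1, where R_k := ρ^k(0) and P_0(n) := R_{n+1}[:−2]. -/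
lemma rho_join (L : List (List ℕ)) : rho L.flatten = (L.map rho).flatten := by
  induction L with
  | nil => simp [rho]
  | cons a l ih => simp [rho_append, ih]

/-- For all n ≥ 1, P₀(n) = R_n · R_{n−1} · ⋯ · R_2 · R_1. -/
theorem P0_product (n : ℕ) (hn : 1 ≤ n) :
    P0 n = ((List.range n).map (fun i => R (n - i))).flatten := by
  clear hn
  induction n with
  | zero => simp [P0, R, rho]
  | succ n ih =>
    rw [P0_succ, ih, rho_join, List.range_succ]
    simp only [List.map_append, List.map_map, List.flatten_append]
    congr 1
    · congr 1
      apply List.map_congr_left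
      intro i hi
      have hilt : i < n := List.mem_range.mp hi
      simp only [Function.comp]
      rw [← R_succ]
      congr 1
      omega
    · simp only [List.map_cons, List.map_nil, List.flatten_cons, List.flatten_nil,
        Nat.sub_self, List.append_nil]
      simp [R, rho]
end

section
/- For n > k > 0, the word ψ_1(k) := (k+1)·P_0(k+1) is not a factor of ψ_1(n) := (n+1)·P_0(n+1), and ψ_1(n) is not a factor of ψ_1(k). -/
/-- The morphism ψ₁: ψ₁(0) = 202101 and ψ₁(n) = (n+1)·P₀(n+1) for n ≥ 1. -/
def psi1 (n : ℕ) : List ℕ := if n = 0 then [2, 0, 2, 1, 0, 1] else (n + 1) :: P0 (n + 1)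

/-- the ruler function -/
def g (i : ℕ) : ℕ := padicValNat 2 (i + 1)

lemma g_even (i : ℕ) : g (2 * i) = 0 :=
  padicValNat.eq_zero_of_not_dvd (by omega)

lemma g_odd (i : ℕ) : g (2 * i + 1) = g i + 1 := by
  have h : 2 * i + 1 + 1 = 2 * (i + 1) := by ring
  unfold g
  rw [h, padicValNat.mul (by norm_num) (by omega), padicValNat.self (by norm_num)]
  omega

lemma myRange_two_mul (N : ℕ) :
    List.range (2 * N) = (List.range N).flatMap (fun i => [2 * i, 2 * i + 1]) := by
  induction N with
  | zero => rfl
  | succ N ih =>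
    have h : 2 * (N + 1) = (2 * N + 1) + 1 := by ring
    rw [h, List.range_succ, List.range_succ, List.range_succ, ih]
    simp

lemma R_eq_s9 (n : ℕ) : R n = (List.range (2 ^ n)).map g := by
  induction n with
  | zero =>
    have h1 : List.range (2 ^ 0) = [0] := rfl
    have h2 : g 0 = 0 := by unfold g; exact padicValNat.one
    rw [h1]
    show [0] = _
    simp [h2]
  | succ n ih =>
    have h2 : (2 : ℕ) ^ (n + 1) = 2 * 2 ^ n := by ring
    rw [R, Function.iterate_succ_apply', ← R, ih, h2, myRange_two_mul]
    unfold rho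
    simp only [List.flatMap_map, List.map_flatMap]
    apply List.flatMap_congr
    intro i _
    simp [g_even, g_odd]

lemma g_pow (m : ℕ) : g (2 ^ m - 1) = m := by
  have h : 2 ^ m - 1 + 1 = 2 ^ m := by
    have := Nat.one_le_two_pow (n := m); omega
  unfold g
  rw [h, padicValNat.prime_pow]

/-- key valuation lemma -/
lemma val_add_pow (i k : ℕ) (hi : 0 < i) (h : g (i - 1) = k + 1) :
    g (i + 2 ^ (k + 1) - 1) ≠ k + 1 := by
  have hi1 : i - 1 + 1 = i := by omega
  unfold g at h
  rw [hi1] at h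
  have hdvd : 2 ^ (k + 1) ∣ i := by
    rw [← h]; exact pow_padicValNat_dvd
  obtain ⟨d, hd⟩ := hdvd
  have hdodd : ¬ 2 ∣ d := by
    intro ⟨e, he⟩
    have : 2 ^ (k + 2) ∣ i := ⟨e, by rw [hd, he]; ring⟩
    rw [padicValNat_dvd_iff_le (by omega)] at this
    omega
  have hd0 : 0 < d := by
    rcases Nat.eq_zero_or_pos d with h0 | h0
    · rw [hd, h0, Nat.mul_zero] at hi; omega
    · exact h0
  have hsum : i + 2 ^ (k + 1) = 2 ^ (k + 1) * (d + 1) := by rw [hd]; ring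
  have hp1 : 1 ≤ 2 ^ (k + 1) := Nat.one_le_two_pow
  have heq : i + 2 ^ (k + 1) - 1 + 1 = 2 ^ (k + 1) * (d + 1) := by omega
  unfold g
  rw [heq]
  have hdvd2 : 2 ^ (k + 2) ∣ 2 ^ (k + 1) * (d + 1) := by
    obtain ⟨e, he⟩ : 2 ∣ d + 1 := by omega
    exact ⟨e, by rw [he]; ring⟩
  rw [padicValNat_dvd_iff_le (by positivity)] at hdvd2
  omega

lemma P0_eq (m : ℕ) : P0 m = (List.range (2 ^ (m + 1) - 2)).map g := by
  have h2 : 2 ≤ 2 ^ (m + 1) := by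
    calc 2 = 2 ^ 1 := rfl
    _ ≤ 2 ^ (m + 1) := Nat.pow_le_pow_right (by norm_num) (by omega)
  have e1 : 2 ^ (m + 1) = (2 ^ (m + 1) - 2 + 1) + 1 := by omega
  rw [P0, R_eq_s9, e1, List.range_succ, List.range_succ]
  simp

lemma psi1_eq (m : ℕ) (hm : m ≠ 0) :
    psi1 m = (m + 1) :: (List.range (2 ^ (m + 2) - 2)).map g := by
  rw [psi1, if_neg hm, P0_eq]

lemma psi1_length (m : ℕ) (hm : m ≠ 0) : (psi1 m).length = 2 ^ (m + 2) - 1 := by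
  rw [psi1_eq m hm]
  have h2 : 2 ≤ 2 ^ (m + 2) := by
    calc 2 = 2 ^ 1 := rfl
    _ ≤ 2 ^ (m + 2) := Nat.pow_le_pow_right (by norm_num) (by omega)
  simp
  omega

lemma get_some (N p v : ℕ) (h : ((List.range N).map g)[p]? = some v) :
    p < N ∧ g p = v := by
  rw [List.getElem?_map] at h
  by_cases hp : p < N
  · rw [List.getElem?_range hp] at h
    simp at h
    exact ⟨hp, h⟩
  · rw [List.getElem?_eq_none (by simpa using hp)] at h
    simp at h

/-- For n > k > 0, neither of ψ₁(n) and ψ₁(k) is a factor of the other. -/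
theorem psi1_not_factor (n k : ℕ) (hk : 0 < k) (hkn : k < n) :
    ¬ (psi1 k <:+: psi1 n) ∧ ¬ (psi1 n <:+: psi1 k) := by
  have hk0 : k ≠ 0 := by omega
  have hn0 : n ≠ 0 := by omega
  constructor
  · rintro ⟨s, t, h⟩
    rw [psi1_eq k hk0, psi1_eq n hn0] at h
    set K := 2 ^ (k + 2) - 2 with hK
    set M := 2 ^ (n + 2) - 2 with hM
    have hKpos : 2 ^ (k + 1) + 2 ≤ K + 2 := by
      have h1 : 2 ≤ 2 ^ (k + 1) := by
        calc 2 = 2 ^ 1 := rfl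
        _ ≤ 2 ^ (k + 1) := Nat.pow_le_pow_right (by norm_num) (by omega)
      have h2 : 2 ^ (k + 1) + 2 ^ (k + 1) = 2 ^ (k + 2) := by ring
      omega
    have hget : ∀ j : ℕ, j < K + 1 →
        (((n : ℕ) + 1) :: (List.range M).map g)[s.length + j]? =
        (((k : ℕ) + 1) :: (List.range K).map g)[j]? := by
      intro j hj
      rw [← h, List.append_assoc,
        List.getElem?_append_right (Nat.le_add_right _ _)]
      have e : s.length + j - s.length = j := by omega
      rw [e, List.getElem?_append_left (by simp; omega)]
    have hs1 : 1 ≤ s.length := by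
      by_contra hs
      have hs0 : s.length = 0 := by omega
      have h0 := hget 0 (by omega)
      rw [hs0] at h0
      simp at h0
      omega
    set i := s.length with hi
    -- j = 0 gives g (i - 1) = k + 1
    have h0 := hget 0 (by omega)
    have e0 : i + 0 = (i - 1) + 1 := by omega
    rw [e0] at h0
    simp only [List.getElem?_cons_succ, List.getElem?_cons_zero] at h0
    obtain ⟨-, hval0⟩ := get_some M (i - 1) (k + 1) h0
    have honek : (1:ℕ) ≤ 2 ^ k := Nat.one_le_two_pow
    have hone : (1:ℕ) ≤ 2 ^ (k + 1) := Nat.one_le_two_pow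
    -- j = 2 ^ (k + 1) gives g (i + 2 ^ (k + 1) - 1) = k + 1
    have h1 := hget (2 ^ (k + 1)) (by omega)
    have e1 : i + 2 ^ (k + 1) = (i + 2 ^ (k + 1) - 1) + 1 := by omega
    have e2 : (2 : ℕ) ^ (k + 1) = (2 ^ (k + 1) - 1) + 1 := by omega
    rw [e1] at h1
    nth_rewrite 2 [e2] at h1
    simp only [List.getElem?_cons_succ] at h1
    rw [List.getElem?_map (f := g) (l := List.range K),
      List.getElem?_range (by omega)] at h1
    simp only [Option.map_some] at h1
    obtain ⟨-, hval1⟩ := get_some M (i + 2 ^ (k + 1) - 1) _ h1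
    rw [g_pow (k + 1)] at hval1
    exact val_add_pow i k (by omega) hval0 hval1
  · intro hf
    have hlen := hf.length_le
    rw [psi1_length k hk0, psi1_length n hn0] at hlen
    have : 2 ^ (k + 2) < 2 ^ (n + 2) := Nat.pow_lt_pow_right (by norm_num) (by omega)
    have h1 : 1 ≤ 2 ^ (k + 2) := Nat.one_le_two_pow
    omega
end

section
/- For every n ≥ 1, appending the letter 0 to ψ_1(n) := (n+1)·P_0(n+1) produces a word ending in a square; specifically, ψ_1(n)·0 = (n+1)·R_{n+1}[:−1]·(n+1)·R_{n+1}[:−1] is itself of the form u·yy with yy a square suffix. -/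
/-- For n ≥ 1, ψ₁(n)·0 = (n+1)·R_{n+1}[:−1]·(n+1)·R_{n+1}[:−1], which ends in a square. -/
theorem psi1_append_zero_square (n : ℕ) (hn : 1 ≤ n) :
    psi1 n ++ [0] =
      ((n + 1) :: (R (n + 1)).dropLast) ++ ((n + 1) :: (R (n + 1)).dropLast) ∧
    ∃ y : List ℕ, y ≠ [] ∧ (y ++ y) <:+ (psi1 n ++ [0]) := by
  have key : ∀ m : ℕ, R m = (R m).dropLast ++ [m] ∧
      R (m + 1) = R m ++ (R m).dropLast ++ [m + 1] := by
    intro m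
    induction m with
    | zero => constructor <;> rfl
    | succ k ih =>
      obtain ⟨h1, h2⟩ := ih
      have hdl : (R (k + 1)).dropLast = R k ++ (R k).dropLast := by
        rw [h2, List.append_assoc]
        simpa using List.dropLast_concat (l := R k ++ (R k).dropLast) (b := (k+1))
      constructor
      · rw [hdl]
        conv_lhs => rw [h2]
      · have hrho : ∀ a b : List ℕ, rho (a ++ b) = rho a ++ rho b := by
          intro a b; simp [rho]
        have hstep : R (k + 2) = rho (R (k + 1)) := by
          show rho^[k+2] [0] = rho (rho^[k+1] [0])
          rw [Function.iterate_succ_apply']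
        have hrk : rho (R k) = R (k + 1) := by
          show rho (rho^[k] [0]) = rho^[k+1] [0]
          rw [Function.iterate_succ_apply']
        -- rho (R k).dropLast ++ [0, k+1] = rho (R k)
        have h3 : rho ((R k).dropLast) ++ [0, k + 1] = R (k + 1) := by
          rw [← hrk]
          conv_rhs => rw [h1]
          simp [rho]
        have h4 : rho ((R k).dropLast) ++ [0] = R k ++ (R k).dropLast := by
          have : rho ((R k).dropLast) ++ [0] ++ [k+1]
              = R k ++ (R k).dropLast ++ [k+1] := by
            rw [List.append_assoc]
            show rho ((R k).dropLast) ++ [0, k+1] = _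
            rw [h3, h2]
          exact List.append_cancel_right this
        rw [hstep]
        conv_lhs => rw [h2]
        rw [hrho, hrho, hdl]
        have : rho [k + 1] = [0, k + 2] := by simp [rho]
        rw [this, hrk]
        rw [List.append_assoc, List.append_assoc]
        congr 1
        calc rho ((R k).dropLast) ++ [0, k + 2]
            = rho ((R k).dropLast) ++ [0] ++ [k + 2] := by simp
          _ = R k ++ (R k).dropLast ++ [k + 2] := by rw [h4]
          _ = R k ++ ((R k).dropLast ++ [k + 2]) := by rw [List.append_assoc]
        simp
  have last0 : ∀ m : ℕ, 1 ≤ m → ∃ w, (R m).dropLast = w ++ [0] := by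
    intro m hm
    induction m with
    | zero => omega
    | succ k ih =>
      have hdl : (R (k + 1)).dropLast = R k ++ (R k).dropLast := by
        rw [(key k).2, List.append_assoc]
        simpa using List.dropLast_concat (l := R k ++ (R k).dropLast) (b := (k+1))
      match k, ih with
      | 0, _ => exact ⟨[], by rw [hdl]; rfl⟩
      | (j+1), ih =>
        obtain ⟨w, hw⟩ := ih (by omega)
        exact ⟨R (j+1) ++ w, by rw [hdl, hw, List.append_assoc]⟩
  obtain ⟨w, hw⟩ := last0 (n + 1) (by omega)
  have hR1 : R (n + 1) = w ++ [0] ++ [n + 1] := by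
    conv_lhs => rw [(key (n + 1)).1, hw]
  have hdl2 : (R (n + 2)).dropLast = R (n + 1) ++ (R (n + 1)).dropLast := by
    rw [(key (n + 1)).2, List.append_assoc]
    simpa using List.dropLast_concat (l := R (n+1) ++ (R (n+1)).dropLast) (b := (n+2))
  have hP0 : P0 (n + 1) = R (n + 1) ++ w := by
    show (R (n + 2)).dropLast.dropLast = _
    rw [hdl2, hw, ← List.append_assoc]
    simpa using List.dropLast_concat (l := R (n+1) ++ w) (b := 0)
  have hpsi : psi1 n = (n + 1) :: P0 (n + 1) := by
    unfold psi1; simp [Nat.one_le_iff_ne_zero.mp hn]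
  have hmain : psi1 n ++ [0] =
      ((n + 1) :: (R (n + 1)).dropLast) ++ ((n + 1) :: (R (n + 1)).dropLast) := by
    rw [hpsi, hP0, hw]
    conv_lhs => rw [hR1]
    simp [List.append_assoc]
  refine ⟨hmain, (n + 1) :: (R (n + 1)).dropLast, by simp, ?_⟩
  rw [hmain]
end

section
/- For every n ≥ 1, the word 0203 · R_3⁺ · R_4⁺ · ⋯ · R_{n+2}⁺ · R_{n+3} is a suffix of α(n). -/
def C : List ℕ := [0, 1, 0, 2, 0, 3, 0, 1, 0, 2]

/-- The word 0203·R₃⁺·R₄⁺·⋯·R_{n+2}⁺·R_{n+3}. -/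
def S (n : ℕ) : List ℕ :=
  [0, 2, 0, 3] ++ ((List.range n).map (fun j => succW (R (j + 3)))).flatten ++ R (n + 3)

lemma rho_ne_nil {w : List ℕ} (h : w ≠ []) : rho w ≠ [] := by
  cases w with
  | nil => exact absurd rfl h
  | cons a t => simp [rho]

lemma getLast!_append {w v : List ℕ} (h : v ≠ []) : (w ++ v).getLast! = v.getLast! := by
  have h1 : v.getLast? = some (v.getLast h) := List.getLast?_eq_getLast h
  have h2 : (w ++ v).getLast? = some (v.getLast h) := by
    rw [List.getLast?_append_of_ne_nil _ h, h1]
  rw [List.getLast!_of_getLast? h1, List.getLast!_of_getLast? h2]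

lemma succW_append {w v : List ℕ} (h : v ≠ []) : succW (w ++ v) = w ++ succW v := by
  unfold succW
  rw [List.dropLast_append_of_ne_nil h, getLast!_append h, List.append_assoc]

lemma succW_suffix {s t : List ℕ} (hs : s ≠ []) (h : s <:+ t) : succW s <:+ succW t := by
  obtain ⟨u, rfl⟩ := h
  rw [succW_append hs]
  exact List.suffix_append u (succW s)

lemma S_succ (n : ℕ) : S (n + 1) = succW (S n) ++ R (n + 4) := by
  unfold S
  rw [succW_append (R_ne_nil (n + 3)), List.range_succ, List.map_append]
  simp [succW, List.append_assoc]

lemma S_ne_nil (n : ℕ) : S n ≠ [] := by simp [S]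

/-- For every n ≥ 1, 0203·R₃⁺·R₄⁺·⋯·R_{n+2}⁺·R_{n+3} is a suffix of α(n), where α
satisfies the recursion α(n) = α(n−1)⁺·R_{n+3}·C·α(n−1)⁺·R_{n+3} for n ≥ 2 and the
base case that 0203·R₃⁺·R₄ is a suffix of α(1). -/
theorem S_suffix_alpha (α : ℕ → List ℕ)
    (hbase : S 1 <:+ α 1)
    (hrec : ∀ n, 2 ≤ n →
      α n = succW (α (n - 1)) ++ R (n + 3) ++ C ++ succW (α (n - 1)) ++ R (n + 3)) :
    ∀ n, 1 ≤ n → S n <:+ α n := by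
  intro n hn
  induction n, hn using Nat.le_induction with
  | base => exact hbase
  | succ n hn ih =>
    rw [hrec (n + 1) (by omega)]
    have h1 : succW (S n) <:+ succW (α n) := succW_suffix (S_ne_nil n) ih
    obtain ⟨u, hu⟩ := h1
    have : n + 1 - 1 = n := by omega
    rw [this, S_succ]
    refine ⟨succW (α n) ++ R (n + 1 + 3) ++ C ++ u, ?_⟩
    rw [← hu]
    have : n + 1 + 3 = n + 4 := by omega
    rw [this]
    simp [List.append_assoc]
end

section
/- Let n₁, n₂ ≥ 0 be letters. If the two-letter word n₁n₂ is not a factor of L(n₂), then L(n₁n₂) = n₁ · L(n₂). -/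
/-- Prepending a letter to an infinite word. -/
def cons1 (a : ℕ) (f : ℕ → ℕ) : ℕ → ℕ := fun n => match n with
  | 0 => a
  | n + 1 => f n

/-- If the two-letter word n₁n₂ is not a factor of L(n₂), then L(n₁n₂) = n₁·L(n₂). -/
theorem L_two_letter (n₁ n₂ : ℕ) (f g : ℕ → ℕ)
    (hf : IsL [n₂] f)
    (hnf : ¬ ∃ i, f i = n₁ ∧ f (i + 1) = n₂)
    (hg : IsL [n₁, n₂] g) :
    g = cons1 n₁ f := by
  obtain ⟨⟨hfp, hfs⟩, hfmin⟩ := hf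
  obtain ⟨⟨hgp, hgs⟩, hgmin⟩ := hg
  have hf0 : f 0 = n₂ := by simpa using hfp 0 (by simp)
  have hg0 : g 0 = n₁ := by simpa using hgp 0 (by simp)
  -- cons1 n₁ f is admissible for [n₁, n₂]
  have hAdm : Adm [n₁, n₂] (cons1 n₁ f) := by
    constructor
    · intro i hi
      simp only [List.length, List.length_cons, List.length_nil] at hi
      interval_cases i
      · simp [cons1]
      · simpa [cons1] using hf0
    · intro i l hl hsq
      match i with
      | i' + 1 =>
        have : i' + 2 * l ≤ [n₂].length := by
          apply hfs i' l hl
          intro j hj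
          have := hsq j hj
          have e1 : i' + 1 + j = (i' + j) + 1 := by omega
          have e2 : i' + 1 + l + j = (i' + l + j) + 1 := by omega
          rw [e1, e2] at this
          simpa [cons1] using this
        simp at this ⊢
        omega
      | 0 =>
        by_cases hl1 : l = 1
        · simp [hl1]
        · exfalso
          obtain ⟨l', rfl⟩ : ∃ l', l = l' + 2 := ⟨l - 2, by omega⟩
          have h0 := hsq 0 hl
          have h1 := hsq 1 (by omega)
          simp only [cons1] at h0 h1
          apply hnf
          refine ⟨l' + 1, ?_, ?_⟩
          · simpa using h0.symm
          · have : f 0 = f (l' + 2) := by simpa [Nat.add_comm] using h1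
            rw [← this, hf0]
  have h1 := hgmin _ hAdm
  -- the shift of g is admissible for [n₂]
  have hAdm' : Adm [n₂] (fun n => g (n + 1)) := by
    constructor
    · intro i hi
      simp only [List.length, List.length_cons, List.length_nil] at hi
      interval_cases i
      simpa using hgp 1 (by simp)
    · intro i l hl hsq
      have : (i + 1) + 2 * l ≤ [n₁, n₂].length := by
        apply hgs (i + 1) l hl
        intro j hj
        have := hsq j hj
        simp only at this
        have e1 : i + 1 + j = (i + j) + 1 := by omega
        have e2 : i + 1 + l + j = (i + l + j) + 1 := by omega
        rw [e1, e2]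
        convert this using 2
      simp at this ⊢
      omega
  have h2 := hfmin _ hAdm'
  rcases h1 with h1 | ⟨i, hpre, hlt⟩
  · exact h1
  · exfalso
    match i with
    | 0 =>
      simp only [cons1, hg0] at hlt
      omega
    | k + 1 =>
      have hck : cons1 n₁ f (k + 1) = f k := rfl
      rw [hck] at hlt
      rcases h2 with h2 | ⟨m, hpre2, hlt2⟩
      · have : f k = g (k + 1) := congrFun h2 k
        omega
      · simp only at hlt2
        rcases lt_trichotomy m k with hm | rfl | hm
        · have := hpre (m + 1) (by omega)
          have hcm : cons1 n₁ f (m + 1) = f m := rfl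
          rw [hcm] at this
          omega
        · omega
        · have := hpre2 k hm
          simp only at this
          omega
end

section
/- For every letter n ≥ 0, L(nn) = n · L(n), where L(nn) is the lexicographically least infinite word beginning with nn whose only square factor is contained in the prefix nn. -/
lemma cons1_succ (a : ℕ) (f : ℕ → ℕ) (k : ℕ) : cons1 a f (k + 1) = f k := rfl

lemma lexLE_cons (a : ℕ) (f h : ℕ → ℕ) (hle : lexLE f h) :
    lexLE (cons1 a f) (cons1 a h) := by
  rcases hle with rfl | ⟨i, hagree, hlt⟩
  · exact Or.inl rfl
  · refine Or.inr ⟨i + 1, ?_, ?_⟩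
    · intro j hj
      match j with
      | 0 => rfl
      | k + 1 => exact hagree k (by omega)
    · exact hlt

lemma lexLE_antisymm (f h : ℕ → ℕ) (h1 : lexLE f h) (h2 : lexLE h f) : f = h := by
  rcases h1 with rfl | ⟨i, a1, b1⟩
  · rfl
  rcases h2 with rfl | ⟨i', a2, b2⟩
  · rfl
  rcases lt_trichotomy i i' with hlt | rfl | hlt
  · have := a2 i hlt; omega
  · omega
  · have := a1 i' hlt; omega

/-- For every letter n, L(nn) = n·L(n). -/
theorem L_nn (n : ℕ) (f g : ℕ → ℕ) (hf : IsL [n] f) (hg : IsL [n, n] g) :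
    g = cons1 n f := by
  have hf0 : f 0 = n := hf.1.1 0 (by simp)
  have hg0 : g 0 = n := hg.1.1 0 (by simp)
  have hg1 : g 1 = n := hg.1.1 1 (by simp)
  -- f has no squares at all
  have hfsq : ∀ i l : ℕ, 0 < l → ¬ (∀ j < l, f (i + j) = f (i + l + j)) := by
    intro i l hl hs
    have := hf.1.2 i l hl hs
    simp at this; omega
  -- cons1 n f is admissible for [n, n]
  have hadm : Adm [n, n] (cons1 n f) := by
    constructor
    · intro i hi
      simp at hi
      interval_cases i
      · rfl
      · simpa [cons1_succ] using hf0
    · intro i l hl hs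
      match i with
      | 0 =>
        match l with
        | 1 => simp
        | l + 2 =>
          exfalso
          have e0 : f (l + 1) = n := by
            have := hs 0 (by omega)
            simpa [cons1] using this.symm
          have e1 : f (l + 2) = n := by
            have := hs 1 (by omega)
            have h2 : (0 : ℕ) + (l + 2) + 1 = (l + 2) + 1 := by omega
            rw [h2] at this
            rw [cons1_succ, cons1_succ] at this
            rw [← this, hf0]
          exact hfsq (l + 1) 1 one_pos (by
            intro j hj
            interval_cases j
            simp [e0, e1])
      | i' + 1 =>
        exfalso
        refine hfsq i' l hl ?_
        intro j hj
        have := hs j hj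
        have e1 : i' + 1 + j = (i' + j) + 1 := by omega
        have e2 : i' + 1 + l + j = (i' + l + j) + 1 := by omega
        rw [e1, e2, cons1_succ, cons1_succ] at this
        exact this
  -- shift of g is admissible for [n]
  have hshift : Adm [n] (fun k => g (k + 1)) := by
    constructor
    · intro i hi
      simp at hi
      subst hi
      simpa using hg1
    · intro i l hl hs
      have := hg.1.2 (i + 1) l hl (by
        intro j hj
        have := hs j hj
        simp only at this
        have e1 : i + 1 + j = (i + j) + 1 := by omega
        have e2 : i + 1 + l + j = (i + l + j) + 1 := by omega
        rw [e1, e2]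
        exact this)
      simp at this ⊢
      omega
  have h1 : lexLE g (cons1 n f) := hg.2 _ hadm
  have h2 : lexLE f (fun k => g (k + 1)) := hf.2 _ hshift
  have hgc : g = cons1 n (fun k => g (k + 1)) := by
    funext k
    match k with
    | 0 => exact hg0
    | k + 1 => rfl
  have h3 : lexLE (cons1 n f) g := by
    rw [hgc]
    exact lexLE_cons n _ _ h2
  exact lexLE_antisymm g (cons1 n f) h1 h3
end

section
/- Let w be a nonempty finite word over ℕ containing a square. Then there is a unique decomposition w = p·s·q such that s·q is the maximal square-free suffix of w (p, s nonempty, q possibly empty) and p[−1]·s is the maximal square prefix of p[−1]·s·q, where p[−1] is the last letter of p. -/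
lemma sqfree_nil' : SqFree [] := by
  intro y hy h
  rw [List.infix_nil] at h
  exact hy (List.append_eq_nil_iff.mp h).1

lemma getLast!_concat' (l : List ℕ) (a : ℕ) : (l ++ [a]).getLast! = a :=
  List.getLast!_of_getLast? List.getLast?_concat

lemma suffix_eq_of_length' (t₁ t₂ w : List ℕ) (h₁ : t₁ <:+ w) (h₂ : t₂ <:+ w)
    (hl : t₁.length = t₂.length) : t₁ = t₂ := by
  obtain ⟨u₁, rfl⟩ := h₁
  obtain ⟨u₂, h⟩ := h₂
  have hu : u₂.length = u₁.length := by
    have := congrArg List.length h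
    simp at this; omega
  exact ((List.append_inj h hu).2).symm ▸ rfl


/-- Every nonempty finite word containing a square has a unique decomposition
w = p·s·q where s·q is the maximal square-free suffix of w and p[−1]·s is the
maximal square prefix of p[−1]·s·q. -/
theorem unique_psq_decomposition (w : List ℕ) (hw : w ≠ [])
    (hsq : ∃ y : List ℕ, y ≠ [] ∧ (y ++ y) <:+: w) :
    ∃! psq : List ℕ × List ℕ × List ℕ,
      w = psq.1 ++ psq.2.1 ++ psq.2.2 ∧ psq.1 ≠ [] ∧ psq.2.1 ≠ [] ∧
      SqFree (psq.2.1 ++ psq.2.2) ∧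
      (∀ t : List ℕ, t <:+ w → SqFree t → t.length ≤ (psq.2.1 ++ psq.2.2).length) ∧
      (∃ y : List ℕ, y ≠ [] ∧ psq.1.getLast! :: psq.2.1 = y ++ y) ∧
      (∀ t : List ℕ, t <+: (psq.1.getLast! :: (psq.2.1 ++ psq.2.2)) →
        (∃ y : List ℕ, y ≠ [] ∧ t = y ++ y) → t.length ≤ psq.2.1.length + 1) := by
  classical
  -- j : minimal index such that w.drop j is square-free
  have hQ : ∃ n, SqFree (w.drop n) := ⟨w.length, by simp [sqfree_nil']⟩
  set j := Nat.find hQ with hjdef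
  have hm : SqFree (w.drop j) := Nat.find_spec hQ
  have hjle : j ≤ w.length := Nat.find_min' hQ (by simp [sqfree_nil'])
  have hjpos : 0 < j := by
    rcases Nat.eq_zero_or_pos j with h0 | h
    · exfalso
      obtain ⟨y, hy, hyw⟩ := hsq
      have := hm
      rw [h0, List.drop_zero] at this
      exact this y hy hyw
    · exact h
  set m := w.drop j with hmdef
  set p := w.take j with hpdef
  have hpm : p ++ m = w := List.take_append_drop j w
  have hpne : p ≠ [] := by
    have : p.length = j := by
      simp [hpdef, List.length_take]; omega
    intro h; rw [h] at this; simp at this; omega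
  -- last letter of p
  obtain ⟨p'', a, hpa⟩ : ∃ l b, p = l ++ [b] := by
    rcases List.eq_nil_or_concat p with h | ⟨l, b, h⟩
    · exact absurd h hpne
    · exact ⟨l, b, by simpa using h⟩
  have ham_suffix : (a :: m) <:+ w := ⟨p'', by rw [← hpm, hpa]; simp⟩
  -- a :: m is not square-free
  have hnam : ¬ SqFree (a :: m) := by
    intro hsf
    have : a :: m = w.drop (j - 1) := by
      apply suffix_eq_of_length' _ _ w ham_suffix (List.drop_suffix _ _)
      have : m.length = w.length - j := by simp [hmdef]
      simp [this]; omega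
    exact Nat.find_min hQ (m := j - 1) (by omega) (this ▸ hsf)
  -- a square prefix of a :: m exists
  obtain ⟨y0, hy0, hy0i⟩ : ∃ y : List ℕ, y ≠ [] ∧ (y ++ y) <:+: (a :: m) := by
    by_contra h
    push_neg at h
    exact hnam (fun y hy => h y hy)
  have hy0p : (y0 ++ y0) <+: (a :: m) := by
    obtain ⟨u, v, huv⟩ := hy0i
    rcases u with _ | ⟨b, u'⟩
    · exact ⟨v, by simpa using huv⟩
    · exfalso
      have : m = u' ++ (y0 ++ y0) ++ v := by
        have := huv
        simp only [List.cons_append] at this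
        exact (List.cons.injEq _ _ _ _ ▸ this.symm).2
      exact hm y0 hy0 ⟨u', v, this.symm⟩
  -- maximal square prefix length L
  set R : ℕ → Prop := fun k => ∃ y : List ℕ, y ≠ [] ∧ (a :: m).take k = y ++ y with hRdef
  set L := Nat.findGreatest R (a :: m).length with hLdef
  have hR0 : R (y0 ++ y0).length := ⟨y0, hy0, (List.prefix_iff_eq_take.mp hy0p).symm⟩
  have hRL : R L := Nat.findGreatest_spec hy0p.length_le hR0
  have hLle : L ≤ (a :: m).length := Nat.findGreatest_le _
  obtain ⟨y1, hy1, hy1t⟩ := hRL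
  have hLlen : L = 2 * y1.length := by
    have hlen := congrArg List.length hy1t
    rw [List.length_take] at hlen
    simp only [List.length_append, List.length_cons] at hlen hLle
    omega
  have hL2 : 2 ≤ L := by
    have : y1.length ≠ 0 := by simpa using hy1
    omega
  set s := m.take (L - 1) with hsdef
  set q := m.drop (L - 1) with hqdef
  have hslen : s.length = L - 1 := by
    simp [hsdef]
    simp at hLle
    omega
  have hsq' : s ++ q = m := List.take_append_drop _ m
  have hL1 : L - 1 + 1 = L := by omega
  have has : a :: s = y1 ++ y1 := by
    rw [← hy1t, hsdef, ← hL1, List.take_succ_cons, Nat.add_sub_cancel]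
  have hpgl : p.getLast! = a := by rw [hpa]; exact getLast!_concat' _ _
  -- maximality of m
  have hmax : ∀ t : List ℕ, t <:+ w → SqFree t → t.length ≤ m.length := by
    intro t ht hsf
    obtain ⟨u, rfl⟩ := ht
    have hdrop : (u ++ t).drop u.length = t := List.drop_left
    have : j ≤ u.length := Nat.find_min' hQ (by rw [hdrop]; exact hsf)
    have hml : m.length = (u ++ t).length - j := by simp [hmdef]
    simp at hml ⊢
    omega
  -- maximality of L
  have hmaxL : ∀ t : List ℕ, t <+: (a :: m) → (∃ y : List ℕ, y ≠ [] ∧ t = y ++ y) →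
      t.length ≤ L := by
    rintro t ht ⟨y, hy, rfl⟩
    exact Nat.le_findGreatest ht.length_le ⟨y, hy, (List.prefix_iff_eq_take.mp ht).symm⟩
  refine ⟨(p, s, q), ⟨?_, hpne, ?_, ?_, ?_, ?_, ?_⟩, ?_⟩
  · simp only
    rw [List.append_assoc, hsq', hpm]
  · simp only
    intro h
    have := congrArg List.length h
    rw [hslen] at this
    simp at this
    omega
  · simpa only [hsq'] using hm
  · simpa only [hsq'] using hmax
  · exact ⟨y1, hy1, by simpa only [hpgl] using has⟩
  · simp only [hsq', hpgl, hslen]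
    intro t ht hsqt
    have := hmaxL t ht hsqt
    omega
  · rintro ⟨p₂, s₂, q₂⟩ ⟨heq, hp₂, hs₂, hsf₂, hmax₂, ⟨y₂, hy₂, hsq₂⟩, hmaxp₂⟩
    simp only at heq hsf₂ hmax₂ hsq₂ hmaxp₂ ⊢
    have hm₂suf : (s₂ ++ q₂) <:+ w := ⟨p₂, by rw [heq]; simp⟩
    have hmsuf : m <:+ w := List.drop_suffix j w
    have hmeq : s₂ ++ q₂ = m := by
      apply suffix_eq_of_length' _ _ w hm₂suf hmsuf
      have h1 := hmax _ hm₂suf hsf₂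
      have h2 := hmax₂ m hmsuf hm
      omega
    have hpeq : p₂ = p := by
      have h : p₂ ++ m = p ++ m := by
        rw [hpm, heq, List.append_assoc, hmeq]
      exact List.append_cancel_right h
    have hgl₂ : p₂.getLast! = a := by rw [hpeq, hpgl]
    rw [hgl₂] at hsq₂ hmaxp₂
    -- s₂ length = L - 1
    have hs₂pm : s₂ <+: m := hmeq ▸ ⟨q₂, rfl⟩
    have h1 : s₂.length + 1 ≤ L := by
      have := hmaxL (a :: s₂) (List.cons_prefix_cons.mpr ⟨rfl, hs₂pm⟩) ⟨y₂, hy₂, hsq₂⟩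
      simpa using this
    have h2 : L ≤ s₂.length + 1 := by
      have hpre : (a :: s) <+: (a :: (s₂ ++ q₂)) := by
        rw [hmeq]
        exact List.cons_prefix_cons.mpr ⟨rfl, hsq' ▸ ⟨q, rfl⟩⟩
      have := hmaxp₂ (a :: s) hpre ⟨y1, hy1, has⟩
      simp [hslen] at this
      omega
    have hs₂len : s₂.length = L - 1 := by omega
    have hseq : s₂ = s := by
      rw [hsdef, ← hs₂len]
      exact List.prefix_iff_eq_take.mp hs₂pm
    have hqeq : q₂ = q := by
      apply List.append_cancel_left (as := s)
      rw [← hseq, hmeq, ← hsq', hseq]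
    simp only [Prod.mk.injEq]
    exact ⟨hpeq, hseq, hqeq⟩
end

section
/- Let w be a finite square-free word with m square-free restrictions, and define x_m as in the recursive construction x_0 = v_0, x_{i+1} = v_{i+1} x_i r_i x_i with v_i = max(w)+i+1 and r_i the i-th square-free restriction of w in lexicographic order. Then for every index 0 ≤ j < |w| and every letter ℓ < w[j], the word x_m · w[:j] · ℓ has a square suffix. -/
def maxL (w : List ℕ) : ℕ := w.foldr max 0

def Restriction (w v : List ℕ) : Prop :=
  ∃ j, j < w.length ∧ ∃ k, k < w.getD j 0 ∧ v = w.take j ++ [k]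

/-- With r₀ ≺ ⋯ ≺ r_{m−1} the restriction sequence of the square-free word w,
v_i = max(w)+i+1, x₀ = v₀ and x_{i+1} = v_{i+1}·x_i·r_i·x_i: for every index
j < |w| and every letter ℓ < w[j], the word x_m · w[:j] · ℓ has a square suffix. -/
theorem xm_forces_w (w : List ℕ) (hw : SqFree w) (m : ℕ) (r : ℕ → List ℕ)
    (hr1 : ∀ i < m, Restriction w (r i) ∧ SqFree (r i))
    (hr2 : ∀ v : List ℕ, Restriction w v → SqFree v → ∃ i < m, r i = v)
    (hr3 : ∀ i j, i < j → j < m → List.Lex (· < ·) (r i) (r j))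
    (x : ℕ → List ℕ)
    (hx0 : x 0 = [maxL w + 1])
    (hxs : ∀ i, x (i + 1) = (maxL w + i + 2) :: (x i ++ r i ++ x i)) :
    ∀ j < w.length, ∀ l < w.getD j 0,
      ∃ y : List ℕ, y ≠ [] ∧ (y ++ y) <:+ (x m ++ w.take j ++ [l]) := by
  intro j hj l hl
  -- x i is nonempty
  have hxne : ∀ i, x i ≠ [] := by
    intro i
    cases i with
    | zero => simp [hx0]
    | succ n => simp [hxs n]
  -- suffix chain : x (i+1) is a suffix of x n for i+1 ≤ n
  have hsuf : ∀ n i, i + 1 ≤ n → (x i ++ r i ++ x i) <:+ x n := by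
    intro n
    induction n with
    | zero => intro i h; omega
    | succ n ih =>
      intro i h
      rcases Nat.lt_or_ge (i+1) (n+1) with h' | h'
      · have := ih i (by omega)
        refine this.trans ?_
        rw [hxs n]
        exact (List.suffix_append (x n ++ r n) (x n)).trans
          (List.suffix_cons _ _) |>.trans (by rw [List.append_assoc]) |>.trans
          (List.suffix_refl _)
      · have : i = n := by omega
        subst this
        rw [hxs i]
        refine List.IsSuffix.trans ?_ (List.suffix_cons _ _)
        exact ⟨[], by simp⟩
  set v : List ℕ := w.take j ++ [l] with hv
  by_cases hsq : SqFree v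
  · -- v is a square-free restriction, so v = r i for some i < m
    obtain ⟨i, him, hri⟩ := hr2 v ⟨j, hj, l, hl, rfl⟩ hsq
    have hs := hsuf m i him
    obtain ⟨p, hp⟩ := hs
    refine ⟨x i ++ r i, by simp [hxne i], ?_⟩
    refine ⟨p, ?_⟩
    have : x m ++ w.take j ++ [l] = x m ++ v := by simp [hv]
    rw [this, ← hri, ← hp]
    simp [List.append_assoc]
  · -- v has a square infix; it must be a suffix of v since w is square-free
    simp only [SqFree, not_forall] at hsq
    obtain ⟨y, hy, hyy⟩ := hsq
    simp only [not_not] at hyy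
    obtain ⟨s, t, hst⟩ := hyy
    refine ⟨y, hy, ?_⟩
    rcases eq_or_ne t [] with rfl | ht
    · refine List.IsSuffix.trans ⟨s, by simpa using hst⟩ ?_
      exact ⟨x m, by simp [hv]⟩
    · -- then y ++ y is an infix of w.take j, hence of w: contradiction
      exfalso
      obtain rfl | ⟨t', a, rfl⟩ := t.eq_nil_or_concat'
      · exact ht rfl
      have heq : (s ++ (y ++ y) ++ t') ++ [a] = w.take j ++ [l] := by
        simpa [List.append_assoc] using hst
      have h2 : s ++ (y ++ y) ++ t' = w.take j :=
        (List.append_inj' heq rfl).1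
      have hinf : (y ++ y) <:+: w := by
        refine List.IsInfix.trans ⟨s, t', h2⟩ ?_
        exact (List.take_prefix j w).isInfix
      exact hw y hy hinf
end
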